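/- For Q ≠ 0 and T = 2n⊗_sX − QP of gauge weight r, the tensor V_T := 2ℓ⊗_sX̂ + Qℓ⊗ℓ + (1/Q)X̂⊗X̂ − (1/(n−1))(Qℓ⁽²⁾ + 2ℓ(X) + (1/Q)X̂(X))γ, where X̂ := γ(X,·), satisfies τ(V_T) = T and has gauge weight r+2 (i.e., its gauge transform equals z^{r+2}V_T). -/

import Mathlib

open Module LinearMap

variable {V : Type*} [AddCommGroup V] [Module ℝ V] [FiniteDimensional ℝ V]

/-- The trace `P^{ab} W_{ab}`. -/
noncomputable def trP (P : Dual ℝ V →ₗ[ℝ] V) (W : V →ₗ[ℝ] Dual ℝ V) : ℝ :=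
  LinearMap.trace ℝ V (P ∘ₗ W)

/-- The energy-momentum map, evaluated on two covectors. -/
noncomputable def tau (P : Dual ℝ V →ₗ[ℝ] V) (n : V) (W : V →ₗ[ℝ] Dual ℝ V)
    (ω χ : Dual ℝ V) : ℝ :=
  ω n * χ (P (W n)) + χ n * ω (P (W n)) - W n n * χ (P ω) - ω n * χ n * trP P W

/-- The tensor `V_T := 2ℓ⊗ₛX̂ + Qℓ⊗ℓ + Q⁻¹X̂⊗X̂ - (1/(𝔫-1))(Qℓ⁽²⁾ + 2ℓ(X) + Q⁻¹X̂(X))γ`,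
where `X̂ := γ(X,·)`. -/
noncomputable def vT (γ : V →ₗ[ℝ] Dual ℝ V) (ℓ : Dual ℝ V) (l2 : ℝ) (𝔫 : ℕ)
    (X : V) (Q : ℝ) : V →ₗ[ℝ] Dual ℝ V :=
  ℓ.smulRight (γ X) + (γ X).smulRight ℓ + Q • ℓ.smulRight ℓ
    + Q⁻¹ • (γ X).smulRight (γ X)
    - ((Q * l2 + 2 * ℓ X + Q⁻¹ * γ X X) / ((𝔫 : ℝ) - 1)) • γ

lemma trace_smulRight' (f : Dual ℝ V) (v : V) :
    LinearMap.trace ℝ V (f.smulRight v) = f v := by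
  have h : f.smulRight v = dualTensorHom ℝ V V (f ⊗ₜ v) := by
    ext m; simp [dualTensorHom_apply]
  rw [h, trace_eq_contract_apply, contractLeft_apply]

/-- For `Q ≠ 0` and `T = 2n⊗ₛX - QP` of gauge weight `r`, the tensor `V_T` satisfies
`τ(V_T) = T` and has gauge weight `r + 2`: the tensor built from the gauge-transformed
data and components equals `z^{r+2} V_T`. -/
theorem vT_preimage_and_gauge_weight
    (γ : V →ₗ[ℝ] Dual ℝ V) (ℓ : Dual ℝ V) (l2 : ℝ) (n : V) (P : Dual ℝ V →ₗ[ℝ] V)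
    (𝔫 : ℕ) (hdim : finrank ℝ V = 𝔫) (h𝔫 : 2 ≤ 𝔫)
    (hγsym : ∀ x y, γ x y = γ y x)
    (hγn : γ n = 0)
    (hℓn : ℓ n = 1)
    (hPsym : ∀ ω χ : Dual ℝ V, ω (P χ) = χ (P ω))
    (hPℓ : P ℓ + l2 • n = 0)
    (hPγ : ∀ x : V, P (γ x) + ℓ x • n = x)
    (X : V) (Q : ℝ) (hQ : Q ≠ 0)
    (z : ℝ) (hz : z ≠ 0) (ζ : V) (r : ℤ) :
    (∀ ω χ : Dual ℝ V,
      tau P n (vT γ ℓ l2 𝔫 X Q) ω χ = ω n * χ X + χ n * ω X - Q * χ (P ω)) ∧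
    vT γ (z • (ℓ + γ ζ)) (z ^ 2 * (l2 + 2 * ℓ ζ + γ ζ ζ)) 𝔫
        ((z ^ (r + 1) : ℝ) • (X - Q • ζ)) (z ^ r * Q)
      = (z ^ (r + 2) : ℝ) • vT γ ℓ l2 𝔫 X Q := by
  have h2 : (2 : ℝ) ≤ (𝔫 : ℝ) := by exact_mod_cast h𝔫
  have hn1 : ((𝔫 : ℝ) - 1) ≠ 0 := by nlinarith
  have hγXn : γ X n = 0 := by rw [hγsym]; simp [hγn]
  have hWn : vT γ ℓ l2 𝔫 X Q n = γ X + Q • ℓ := by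
    simp [vT, hℓn, hγXn, hγn]
  have hPγX : P (γ X) = X - ℓ X • n := eq_sub_of_add_eq (hPγ X)
  have hPℓ' : P ℓ = -(l2 • n) := eq_neg_of_add_eq_zero_left hPℓ
  have hPW : P (vT γ ℓ l2 𝔫 X Q n) = X - (ℓ X + Q * l2) • n := by
    rw [hWn, map_add, map_smul, hPγX, hPℓ']
    module
  have hWnn : vT γ ℓ l2 𝔫 X Q n n = Q := by
    rw [hWn]; simp [hγXn, hℓn]
  have hsm : ∀ (ω χ : Dual ℝ V),
      LinearMap.trace ℝ V (P ∘ₗ ω.smulRight χ) = ω (P χ) := by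
    intro ω χ
    have h : P ∘ₗ ω.smulRight χ = ω.smulRight (P χ) := by
      ext v; simp
    rw [h, trace_smulRight']
  have hγtr : LinearMap.trace ℝ V (P ∘ₗ γ) = (𝔫 : ℝ) - 1 := by
    have h : P ∘ₗ γ = LinearMap.id - ℓ.smulRight n := by
      ext v
      simp [eq_sub_of_add_eq (hPγ v)]
    rw [h, map_sub, trace_id, trace_smulRight', hℓn, hdim]
  have htr : trP P (vT γ ℓ l2 𝔫 X Q) = -(2 * Q * l2) - 2 * ℓ X := by
    simp only [trP, vT, comp_add, comp_sub, LinearMap.comp_smul, map_add, map_sub,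
      map_smul, smul_eq_mul, hsm, hγtr, hPγX, hPℓ']
    simp only [map_sub, map_smul, map_neg, hℓn, hγXn, smul_eq_mul]
    field_simp
    ring
  constructor
  · intro ω χ
    simp only [tau, hPW, hWnn, htr, map_sub, map_add, map_smul, smul_eq_mul]
    ring
  · ext x y
    have hzr : (z : ℝ) ^ r ≠ 0 := zpow_ne_zero _ hz
    have e1 : (z : ℝ) ^ (r + 1) = z ^ r * z := by
      rw [zpow_add₀ hz, zpow_one]
    have e2 : (z : ℝ) ^ (r + 2) = z ^ r * z ^ 2 := by
      rw [zpow_add₀ hz]; norm_num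
    simp only [vT, LinearMap.add_apply, LinearMap.sub_apply, LinearMap.smul_apply, smulRight_apply, smul_eq_mul,
      map_add, map_sub, map_smul, e1, e2]
    rw [hγsym X ζ]
    field_simp
    ring
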